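/- Strong Siegel's lemma: for a complex symmetric n×n matrix Z with positive definite imaginary part, the quotient χ_j(Z) = Δ_j(Z)/Δ_{j−1}(Z) of consecutive principal minors has strictly positive imaginary part, for each 1 ≤ j ≤ n (with Δ_0 := 1). -/

import Mathlib

open Matrix


theorem sum_range_inj {k n : ℕ} (e : Fin k → Fin n) (he : Function.Injective e)
    (g : Fin n → ℝ) (hg : ∀ i, (∀ l, e l ≠ i) → g i = 0) :
    ∑ i, g i = ∑ l, g (e l) := by
  rw [show ∑ l, g (e l) = Finset.sum (Finset.univ.map ⟨e, he⟩) g from (Finset.sum_map Finset.univ ⟨e, he⟩ g).symm]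
  exact (Finset.sum_subset (Finset.subset_univ _) (fun i _ hi =>
    hg i (fun l hel => hi (Finset.mem_map.mpr ⟨l, Finset.mem_univ l, hel⟩)))).symm

theorem posdef_submatrix {n k : ℕ} {M : Matrix (Fin n) (Fin n) ℝ} (hM : M.PosDef)
    (e : Fin k → Fin n) (he : Function.Injective e) : (M.submatrix e e).PosDef := by
  refine PosDef.of_dotProduct_mulVec_pos (hM.1.submatrix e) fun x hx => ?_
  classical
  set y : Fin n → ℝ := fun i => ∑ l, if e l = i then x l else 0 with hy
  have hy_e : ∀ l, y (e l) = x l := by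
    intro l
    simp only [hy, he.eq_iff]
    simp
  have hy0 : ∀ i, (∀ l, e l ≠ i) → y i = 0 := fun i h =>
    Finset.sum_eq_zero fun l _ => if_neg (h l)
  have hyne : y ≠ 0 := fun h => hx (funext fun l => by
    have := congrFun h (e l); rw [hy_e l] at this; exact this)
  have key := hM.dotProduct_mulVec_pos hyne
  have heq : star y ⬝ᵥ M *ᵥ y = star x ⬝ᵥ (M.submatrix e e) *ᵥ x := by
    simp only [dotProduct, mulVec, star_trivial, submatrix_apply]
    rw [sum_range_inj e he _ (fun i h => by rw [hy0 i h, zero_mul])]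
    refine Finset.sum_congr rfl fun l _ => ?_
    rw [hy_e l]
    congr 1
    rw [sum_range_inj e he _ (fun i h => by rw [hy0 i h, mul_zero])]
    exact Finset.sum_congr rfl fun l' _ => by rw [hy_e l']
  rw [← heq]
  exact key

theorem im_quadform {k : ℕ} (W : Matrix (Fin k) (Fin k) ℂ) (hsym : Wᵀ = W) (v : Fin k → ℂ) :
    (star v ⬝ᵥ W *ᵥ v).im =
      (fun i => (v i).re) ⬝ᵥ (W.map Complex.im) *ᵥ (fun i => (v i).re) +
      (fun i => (v i).im) ⬝ᵥ (W.map Complex.im) *ᵥ (fun i => (v i).im) := by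
  have h2 : ∀ i j, W j i = W i j := fun i j => by conv_lhs => rw [← hsym, transpose_apply]
  have cross : ∑ i, ∑ j, (W i j).re * ((v i).re * (v j).im - (v i).im * (v j).re) = 0 := by
    have hS : ∑ i, ∑ j, (W i j).re * ((v i).re * (v j).im - (v i).im * (v j).re)
        = -∑ i, ∑ j, (W i j).re * ((v i).re * (v j).im - (v i).im * (v j).re) := by
      nth_rewrite 1 [Finset.sum_comm]
      rw [← Finset.sum_neg_distrib]
      refine Finset.sum_congr rfl fun i _ => ?_
      rw [← Finset.sum_neg_distrib]
      refine Finset.sum_congr rfl fun j _ => ?_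
      rw [h2 i j]
      ring
    linarith
  have expand : ∀ i j : Fin k, ((starRingEnd ℂ) (v i) * (W i j * v j)).im
      = (v i).re * ((W i j).im * (v j).re) + (v i).im * ((W i j).im * (v j).im)
        + (W i j).re * ((v i).re * (v j).im - (v i).im * (v j).re) := by
    intro i j
    simp only [Complex.mul_im, Complex.mul_re, Complex.conj_re, Complex.conj_im]
    ring
  simp only [dotProduct, mulVec, map_apply, Pi.star_apply, RCLike.star_def, Finset.mul_sum,
    Complex.im_sum, expand, Finset.sum_add_distrib, cross, add_zero]

theorem im_quadform_pos {k : ℕ} (W : Matrix (Fin k) (Fin k) ℂ) (hsym : Wᵀ = W)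
    (hpos : (W.map Complex.im).PosDef) (v : Fin k → ℂ) (hv : v ≠ 0) :
    0 < (star v ⬝ᵥ W *ᵥ v).im := by
  rw [im_quadform W hsym v]
  set a : Fin k → ℝ := fun i => (v i).re with ha
  set b : Fin k → ℝ := fun i => (v i).im with hb
  have hab : a ≠ 0 ∨ b ≠ 0 := by
    by_contra h
    push_neg at h
    exact hv (funext fun i => Complex.ext (congrFun h.1 i) (congrFun h.2 i))
  have hsa : star a = a := star_trivial a
  have hsb : star b = b := star_trivial b
  rcases hab with h | h
  · have h1 := hpos.dotProduct_mulVec_pos h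
    have h2 := hpos.posSemidef.dotProduct_mulVec_nonneg b
    rw [hsa] at h1
    rw [hsb] at h2
    linarith
  · have h1 := hpos.posSemidef.dotProduct_mulVec_nonneg a
    have h2 := hpos.dotProduct_mulVec_pos h
    rw [hsa] at h1
    rw [hsb] at h2
    linarith

theorem det_ne_zero_of_im_posdef {k : ℕ} (W : Matrix (Fin k) (Fin k) ℂ) (hsym : Wᵀ = W)
    (hpos : (W.map Complex.im).PosDef) : W.det ≠ 0 := by
  intro h
  obtain ⟨v, hv, hWv⟩ := (Matrix.exists_mulVec_eq_zero_iff).mpr h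
  have h2 := im_quadform_pos W hsym hpos v hv
  rw [hWv] at h2
  simp at h2


/-- The `j`-th principal minor of `Z`: determinant of the upper-left `j × j` block.
For `j = 0` this is `1`. -/
def principalMinor (n : ℕ) (Z : Matrix (Fin n) (Fin n) ℂ) (j : ℕ) (h : j ≤ n) : ℂ :=
  (Z.submatrix (Fin.castLE h) (Fin.castLE h)).det

theorem strong_siegel_lemma (n : ℕ) (Z : Matrix (Fin n) (Fin n) ℂ)
    (hsym : Zᵀ = Z) (hpos : (Z.map Complex.im).PosDef)
    (j : ℕ) (hj1 : 1 ≤ j) (hjn : j ≤ n) :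
    0 < (principalMinor n Z j hjn /
      principalMinor n Z (j - 1) ((Nat.sub_le j 1).trans hjn)).im := by
  obtain ⟨m, rfl⟩ : ∃ m, j = m + 1 := ⟨j - 1, (Nat.succ_pred_eq_of_pos hj1).symm⟩
  have hmn : m ≤ n := le_trans (Nat.le_succ m) hjn
  set e : Fin (m + 1) → Fin n := Fin.castLE hjn with he
  set W : Matrix (Fin (m + 1)) (Fin (m + 1)) ℂ := Z.submatrix e e with hW
  have hWsym : Wᵀ = W := by rw [hW, transpose_submatrix, hsym]
  have hWpos : (W.map Complex.im).PosDef := by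
    have h1 : W.map Complex.im = (Z.map Complex.im).submatrix e e := by
      ext i j'; simp [hW]
    rw [h1]
    exact posdef_submatrix hpos e (Fin.castLE_injective hjn)
  have hdet : W.det ≠ 0 := det_ne_zero_of_im_posdef W hWsym hWpos
  have hWu : IsUnit W.det := isUnit_iff_ne_zero.mpr hdet
  set v : Fin (m + 1) → ℂ := W⁻¹ *ᵥ Pi.single (Fin.last m) 1 with hv
  have hWv : W *ᵥ v = Pi.single (Fin.last m) 1 := by
    rw [hv, mulVec_mulVec, mul_nonsing_inv _ hWu, one_mulVec]
  have hvne : v ≠ 0 := by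
    intro h0
    rw [h0, mulVec_zero] at hWv
    have := congrFun hWv (Fin.last m)
    simp at this
  set c : ℂ := W⁻¹ (Fin.last m) (Fin.last m) with hc
  have hvlast : v (Fin.last m) = c := by
    rw [hv, mulVec_single]
    simp [hc]
  have him := im_quadform_pos W hWsym hWpos v hvne
  rw [hWv] at him
  have him2 : (star v ⬝ᵥ Pi.single (Fin.last m) 1).im = -c.im := by
    rw [dotProduct_single, mul_one, Pi.star_apply, ← hvlast]
    simp
  rw [him2] at him
  have hcim : c.im < 0 := by linarith
  -- Cramer: c = (det W)⁻¹ * Δ'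
  set Δ' : ℂ := principalMinor n Z m hmn with hΔ'
  have hceq : c = W.det⁻¹ * Δ' := by
    rw [hc, Matrix.inv_def, Ring.inverse_eq_inv', Matrix.smul_apply, smul_eq_mul]
    congr 1
    rw [adjugate_fin_succ_eq_det_submatrix, Fin.succAbove_last]
    have hval : ((Fin.last m : Fin (m+1)) : ℕ) = m := rfl
    rw [hval]
    have hpow : ((-1 : ℂ)) ^ (m + m) = 1 := by
      rw [← two_mul, pow_mul]
      norm_num
    rw [hpow, one_mul, hΔ', principalMinor, hW, submatrix_submatrix]
    congr 1
  have hcne : c ≠ 0 := fun h => by rw [h] at hcim; simp at hcim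
  have hΔ'ne : Δ' ≠ 0 := by
    intro h
    rw [h, mul_zero] at hceq
    exact hcne hceq
  have hquot : principalMinor n Z (m + 1) hjn /
      principalMinor n Z (m + 1 - 1) ((Nat.sub_le (m+1) 1).trans hjn) = c⁻¹ := by
    have h1 : principalMinor n Z (m + 1) hjn = W.det := rfl
    have h2 : principalMinor n Z (m + 1 - 1) ((Nat.sub_le (m+1) 1).trans hjn) = Δ' := rfl
    rw [h1, h2, hceq, mul_inv, inv_inv, div_eq_mul_inv]
  rw [hquot, Complex.inv_im]
  apply div_pos (by linarith) (Complex.normSq_pos.mpr hcne)
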